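/- Transcendence degree is submodular on finite subsets of a field: for finite subsets A, B of a field K, trdeg(A∪B) + trdeg(A∩B) ≤ trdeg(A) + trdeg(B), where trdeg(S) denotes the transcendence degree over the prime field of the subfield generated by S. -/

import Mathlib

open scoped Classical

section Helpers

variable {F K : Type*} [Field F] [Field K] [Algebra F K]

open Polynomial in
theorem div_lemma' {F K : Type*} [Field F] [Field K] [Algebra F K] (S : Set K) {x : K}
    (h : IsAlgebraic (IntermediateField.adjoin F S) x) :
    IsAlgebraic (Algebra.adjoin F S) x := by
  classical
  obtain ⟨p, hp, hpx⟩ := h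
  have key : ∀ c : IntermediateField.adjoin F S, ∃ a b : Algebra.adjoin F S,
      (b : K) ≠ 0 ∧ (c : K) * b = a := by
    intro c
    obtain ⟨r, s, hrs⟩ := (IntermediateField.mem_adjoin_iff F (c : K)).1 c.2
    by_cases hs : MvPolynomial.aeval (Subtype.val : S → K) s = 0
    · exact ⟨0, 1, by simp, by simp [hrs, hs]⟩
    · have hmem : ∀ u : MvPolynomial S F,
          MvPolynomial.aeval (Subtype.val : S → K) u ∈ Algebra.adjoin F S := by
        intro u
        have h1 : Algebra.adjoin F S = Algebra.adjoin F (Set.range (Subtype.val : S → K)) := by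
          rw [Subtype.range_coe]
        rw [h1, Algebra.adjoin_range_eq_range_aeval]
        exact ⟨u, rfl⟩
      exact ⟨⟨_, hmem r⟩, ⟨_, hmem s⟩, hs, by rw [hrs]; field_simp⟩
  choose a b hb hab using key
  set N := p.natDegree + 1 with hN
  set q : Polynomial (Algebra.adjoin F S) := ∑ i ∈ Finset.range N,
    C (a (p.coeff i) * ∏ j ∈ (Finset.range N).erase i, b (p.coeff j)) * X ^ i with hq
  set P : K := ∏ j ∈ Finset.range N, (b (p.coeff j) : K) with hP
  have hPne : P ≠ 0 := Finset.prod_ne_zero_iff.2 fun j _ => hb _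
  have hqc : ∀ k, q.coeff k =
      if k ∈ Finset.range N then
        a (p.coeff k) * ∏ j ∈ (Finset.range N).erase k, b (p.coeff j) else 0 := by
    intro k
    rw [hq, finset_sum_coeff]
    simp only [coeff_C_mul, coeff_X_pow]
    by_cases hk : k ∈ Finset.range N
    · rw [if_pos hk, Finset.sum_eq_single k]
      · simp
      · intro i _ hik
        simp [Ne.symm hik]
      · intro hk'; exact absurd hk hk'
    · rw [if_neg hk]
      refine Finset.sum_eq_zero fun i hi => ?_
      have : ¬ (k = i) := fun h => hk (h ▸ hi)
      simp [this]
  have hcoeff : ∀ k ∈ Finset.range N, ((q.coeff k : K)) = (p.coeff k : K) * P := by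
    intro k hk
    rw [hqc k, if_pos hk]
    push_cast
    rw [← hab (p.coeff k), mul_assoc,
      Finset.mul_prod_erase _ (fun j => ((b (p.coeff j)) : K)) hk]
  have hqne : q ≠ 0 := by
    intro h0
    have hk : p.natDegree ∈ Finset.range N := by simp [hN]
    have h1 := hcoeff p.natDegree hk
    rw [h0] at h1
    simp only [coeff_zero, ZeroMemClass.coe_zero] at h1
    have hpc : (p.coeff p.natDegree : K) ≠ 0 := by
      simpa using (mt leadingCoeff_eq_zero.1 hp)
    rcases mul_eq_zero.1 h1.symm with h2 | h2
    · exact hpc h2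
    · exact hPne h2
  refine ⟨q, hqne, ?_⟩
  have haq : Polynomial.aeval x q = ∑ i ∈ Finset.range N, (q.coeff i : K) * x ^ i := by
    rw [hq, map_sum]
    refine Finset.sum_congr rfl fun i hi => ?_
    rw [map_mul, map_pow, aeval_X, aeval_C, hqc i, if_pos hi]
    rfl
  have hpsum : ∑ i ∈ Finset.range N, (p.coeff i : K) * x ^ i = 0 := by
    have h3 := Polynomial.aeval_eq_sum_range' (show p.natDegree < N by omega) x
    rw [hpx] at h3
    have h2 : ∀ i ∈ Finset.range N, p.coeff i • x ^ i = (p.coeff i : K) * x ^ i := by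
      intro i _
      rw [Algebra.smul_def]
      rfl
    rw [Finset.sum_congr rfl h2] at h3
    exact h3.symm
  rw [haq]
  calc ∑ i ∈ Finset.range N, (q.coeff i : K) * x ^ i
      = ∑ i ∈ Finset.range N, ((p.coeff i : K) * P) * x ^ i :=
        Finset.sum_congr rfl fun i hi => by rw [hcoeff i hi]
    _ = P * ∑ i ∈ Finset.range N, (p.coeff i : K) * x ^ i := by
        rw [Finset.mul_sum]; exact Finset.sum_congr rfl fun i _ => by ring
    _ = 0 := by rw [hpsum, mul_zero]

theorem exchange' {F K : Type*} [Field F] [Field K] [Algebra F K] {x y : K}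
    (hxy : IsAlgebraic (IntermediateField.adjoin F {y}) x) (hx : Transcendental F x) :
    IsAlgebraic (IntermediateField.adjoin F {x}) y := by
  by_contra hy'
  -- singleton family x independent
  have h1 : AlgebraicIndependent F (fun _ : Unit => x) :=
    (algebraicIndependent_unique_type_iff).2 hx
  have hrx : Set.range (fun _ : Unit => x) = {x} := Set.range_const
  have ty : Transcendental (Algebra.adjoin F (Set.range (fun _ : Unit => x))) y := by
    intro halg
    exact hy' (IsAlgebraic.tower_top_of_subalgebra_le
      (hrx ▸ IntermediateField.algebra_adjoin_le_adjoin F {x}) halg)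
  have h2 : AlgebraicIndependent F (fun o : Option Unit => o.elim y (fun _ => x)) :=
    (h1.option_iff_transcendental y).2 ty
  -- swap
  let e : Option Unit ≃ Option Unit :=
    ⟨fun o => o.elim (some ()) (fun _ => none), fun o => o.elim (some ()) (fun _ => none),
      by rintro (_ | ⟨⟨⟩⟩) <;> rfl, by rintro (_ | ⟨⟨⟩⟩) <;> rfl⟩
  have h3 : AlgebraicIndependent F (fun o : Option Unit => o.elim x (fun _ => y)) := by
    have := h2.comp e e.injective
    convert this using 1
    funext o
    rcases o with _ | ⟨⟨⟩⟩ <;> rfl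
  have h4 : AlgebraicIndependent F (fun _ : Unit => y) := by
    have := h3.comp (fun u : Unit => some u) (fun a b _ => rfl)
    convert this using 1
    rfl
  have h5 : Transcendental (Algebra.adjoin F (Set.range (fun _ : Unit => y))) x :=
    (h4.option_iff_transcendental x).1 h3
  rw [Set.range_const] at h5
  exact h5 (div_lemma' {y} hxy)

theorem ind_insert_iff' {S : Set K} (hS : AlgebraicIndependent F ((↑) : S → K)) {x : K}
    (hx : x ∉ S) :
    AlgebraicIndependent F ((↑) : ↥(insert x S) → K) ↔
      Transcendental (Algebra.adjoin F S) x := by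
  classical
  have hopt : AlgebraicIndependent F (fun o : Option S => o.elim x (↑)) ↔
      Transcendental (Algebra.adjoin F S) x := by
    rw [hS.option_iff_transcendental x, Subtype.range_coe]
  rw [← hopt]
  constructor
  · intro h
    have hinj : Function.Injective (fun o : Option S => o.elim ⟨x, Set.mem_insert x S⟩
        (fun z => (⟨z, Set.mem_insert_of_mem x z.2⟩ : ↥(insert x S)))) := by
      rintro (_ | z) (_ | w) hzw <;> dsimp at hzw
      · rfl
      · have h1 : x = (w : K) := congrArg Subtype.val hzw
        exact absurd (h1 ▸ w.2) hx
      · have h1 : (z : K) = x := congrArg Subtype.val hzw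
        exact absurd (h1 ▸ z.2) hx
      · have h1 := Subtype.ext_iff.mp hzw
        exact congrArg some (Subtype.ext h1)
    have := h.comp _ hinj
    convert this using 1
    funext o
    rcases o with _ | z <;> rfl
  · intro h
    set g : ↥(insert x S) → Option S := fun z =>
      if hz : (z : K) ∈ S then some ⟨z, hz⟩ else none with hg
    have hinj : Function.Injective g := by
      intro z w hzw
      by_cases hz : (z : K) ∈ S <;> by_cases hw : (w : K) ∈ S <;>
        simp only [hg, hz, hw, dif_pos, dif_neg, not_false_iff] at hzw
      · have h1 := Option.some_injective _ hzw
        have h2 := Subtype.ext_iff.mp h1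
        exact Subtype.ext h2
      · exact absurd hzw (by simp)
      · exact absurd hzw (by simp)
      · have hz' : (z : K) = x := z.2.resolve_right hz
        have hw' : (w : K) = x := w.2.resolve_right hw
        exact Subtype.ext (hz'.trans hw'.symm)
    have := h.comp g hinj
    convert this using 1
    funext z
    by_cases hz : (z : K) ∈ S
    · simp [hg, hz]
    · have hz' : (z : K) = x := z.2.resolve_right hz
      simp [hg, hz, hz', hx]

theorem alg_mono' {M N : IntermediateField F K} (h : M ≤ N) {z : K} (hz : IsAlgebraic M z) :
    IsAlgebraic N z :=
  IsAlgebraic.tower_top_of_subalgebra_le (show M.toSubalgebra ≤ N.toSubalgebra from h) hz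

theorem core' (t : Finset K)
    (ht : AlgebraicIndependent F ((↑) : ↥(↑t : Set K) → K)) :
    ∀ (s : Finset K), (∀ z ∈ t, IsAlgebraic (IntermediateField.adjoin F (↑s : Set K)) z) →
      t.card ≤ s.card := by
  classical
  suffices H : ∀ n (s : Finset K), (t \ s).card = n →
      (∀ z ∈ t, IsAlgebraic (IntermediateField.adjoin F (↑s : Set K)) z) → t.card ≤ s.card by
    exact fun s hs => H _ s rfl hs
  intro n
  induction n using Nat.strong_induction_on with
  | _ n IH =>
    intro s hn hs
    by_cases hts : t \ s = ∅
    · exact Finset.card_le_card (Finset.sdiff_eq_empty_iff_subset.1 hts)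
    · obtain ⟨x, hxts⟩ := Finset.nonempty_iff_ne_empty.2 hts
      obtain ⟨hxt, hxs⟩ := Finset.mem_sdiff.1 hxts
      -- minimal algebraic support
      set Pm := s.powerset.filter
        (fun u : Finset K => IsAlgebraic (IntermediateField.adjoin F (↑u : Set K)) x) with hPm
      have hsP : s ∈ Pm := Finset.mem_filter.2 ⟨Finset.mem_powerset_self s, hs x hxt⟩
      obtain ⟨s', hs'P, hmin'⟩ := Finset.exists_min_image Pm Finset.card ⟨s, hsP⟩
      obtain ⟨hs's, halgs'⟩ := Finset.mem_filter.1 hs'P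
      rw [Finset.mem_powerset] at hs's
      have hmin : ∀ y ∈ s', ¬ IsAlgebraic (IntermediateField.adjoin F (↑(s'.erase y) : Set K)) x := by
        intro y hy halg
        have hmem : s'.erase y ∈ Pm := Finset.mem_filter.2
          ⟨Finset.mem_powerset.2 ((Finset.erase_subset y s').trans hs's), halg⟩
        have := hmin' _ hmem
        have hlt := Finset.card_erase_lt_of_mem hy
        omega
      -- s' is not a subset of t
      have hnotsub : ¬ (s' ⊆ t) := by
        intro hsub
        have hxns' : x ∉ (↑s' : Set K) := fun h => hxs (hs's h)
        have hindl : AlgebraicIndependent F ((↑) : ↥(↑s' : Set K) → K) :=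
          ht.mono (by exact_mod_cast Finset.coe_subset.2 hsub)
        have hins : AlgebraicIndependent F ((↑) : ↥(insert x (↑s' : Set K)) → K) := by
          refine ht.mono ?_
          intro z hz
          rcases hz with rfl | hz
          · exact hxt
          · exact hsub hz
        exact ((ind_insert_iff' hindl hxns').1 hins) (div_lemma' _ halgs')
      obtain ⟨y, hys', hyt⟩ := Finset.not_subset.1 hnotsub
      set L := IntermediateField.adjoin F (↑(s'.erase y) : Set K) with hLdef
      have hxL : Transcendental L x := hmin y hys'
      have hset : (↑(s'.erase y) : Set K) ∪ {y} = (↑s' : Set K) := by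
        rw [Set.union_singleton, Finset.coe_erase, Set.insert_diff_singleton,
          Set.insert_eq_self]
        exact hys'
      have hxyL : IsAlgebraic (IntermediateField.adjoin L {y}) x := by
        have h7 := IntermediateField.adjoin_adjoin_left F (↑(s'.erase y) : Set K) {y}
        rw [hset] at h7
        have h2 : IsAlgebraic ↥((IntermediateField.adjoin L {y}).restrictScalars F) x := by
          rw [h7]; exact halgs'
        exact h2
      have hyx : IsAlgebraic (IntermediateField.adjoin L {x}) y := exchange' hxyL hxL
      set s'' := insert x (s.erase y) with hs''def
      have hys : y ∈ s := hs's hys'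
      have hcard'' : s''.card = s.card := by
        rw [hs''def, Finset.card_insert_of_notMem (fun h => hxs (Finset.erase_subset y s h)),
          Finset.card_erase_of_mem hys]
        have : 0 < s.card := Finset.card_pos.2 ⟨y, hys⟩
        omega
      set M := IntermediateField.adjoin F (↑s'' : Set K) with hMdef
      have hyM : IsAlgebraic M y := by
        have h3 := IntermediateField.adjoin_adjoin_left F (↑(s'.erase y) : Set K) {x}
        have h4 : IsAlgebraic ↥((IntermediateField.adjoin L {x}).restrictScalars F) y := hyx
        rw [h3] at h4
        refine alg_mono' (IntermediateField.adjoin.mono F _ _ ?_) h4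
        intro z hz
        rw [Set.mem_union] at hz
        rcases hz with hz | hz
        · have hz1 := Finset.mem_erase.1 (Finset.mem_coe.1 hz)
          exact Finset.mem_coe.2 (Finset.mem_insert_of_mem
            (Finset.mem_erase.2 ⟨hz1.1, hs's hz1.2⟩))
        · rcases hz with rfl
          exact Finset.mem_coe.2 (Finset.mem_insert_self _ _)
      have hspan : ∀ z ∈ t, IsAlgebraic M z := by
        intro z hz
        have h5 : IsAlgebraic (IntermediateField.adjoin F (↑s : Set K)) z := hs z hz
        have h6 : IsAlgebraic (IntermediateField.adjoin F (insert y (↑s'' : Set K))) z := by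
          refine alg_mono' (IntermediateField.adjoin.mono F _ _ ?_) h5
          intro w hw
          by_cases hwy : w = y
          · rw [hwy]; exact Set.mem_insert _ _
          · exact Set.mem_insert_of_mem _ (Finset.mem_coe.2 (Finset.mem_insert_of_mem
              (Finset.mem_erase.2 ⟨hwy, Finset.mem_coe.1 hw⟩)))
        have h7 := IntermediateField.adjoin_adjoin_left F (↑s'' : Set K) {y}
        rw [Set.union_singleton] at h7
        rw [← h7] at h6
        have h9 : IsAlgebraic ↥(IntermediateField.adjoin M {y}) z := h6
        have hyint : IsIntegral M y := isAlgebraic_iff_isIntegral.1 hyM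
        haveI := IntermediateField.adjoin.finiteDimensional hyint
        haveI : Algebra.IsIntegral M (IntermediateField.adjoin M {y}) :=
          Algebra.IsIntegral.of_finite _ _
        have h10 : IsIntegral (IntermediateField.adjoin M {y}) z :=
          isAlgebraic_iff_isIntegral.1 h9
        exact (isIntegral_trans z h10).isAlgebraic
      -- induction step
      have hsub2 : t \ s'' ⊆ (t \ s).erase x := by
        intro z hz
        obtain ⟨hzt, hzs''⟩ := Finset.mem_sdiff.1 hz
        refine Finset.mem_erase.2 ⟨?_, Finset.mem_sdiff.2 ⟨hzt, ?_⟩⟩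
        · intro h; exact hzs'' (h ▸ Finset.mem_insert_self x _)
        · intro hzs
          have hzy : z ≠ y := fun h => hyt (h ▸ hzt)
          exact hzs'' (Finset.mem_insert_of_mem (Finset.mem_erase.2 ⟨hzy, hzs⟩))
      have hlt : (t \ s'').card < n := by
        have h1 := Finset.card_le_card hsub2
        have h2 := Finset.card_erase_lt_of_mem hxts
        omega
      have := IH _ hlt s'' rfl hspan
      omega

end Helpers

/-- The transcendence degree over the prime field of the subfield generated by a finite
subset `A` of a field `K`. -/
noncomputable def ftrdeg (K : Type*) [Field K] (A : Finset K) : ℕ :=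
  sSup {n | ∃ s ⊆ A, s.card = n ∧
    AlgebraicIndependent (⊥ : Subfield K) (fun x : {y : K // y ∈ s} => (x : K))}

section main
variable {K : Type*} [Field K]

local notation "F₀" => (⊥ : Subfield K)

def IndF (s : Finset K) : Prop :=
  AlgebraicIndependent F₀ ((↑) : ↥(↑s : Set K) → K)

theorem indF_iff (s : Finset K) :
    (AlgebraicIndependent F₀ (fun x : {y : K // y ∈ s} => (x : K))) ↔ IndF s := Iff.rfl

theorem indF_empty : IndF (∅ : Finset K) := by
  have : IsEmpty ↥((↑(∅ : Finset K)) : Set K) := ⟨fun x => by simpa using x.2⟩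
  exact algebraicIndependent_empty_type

theorem indF_mono {s u : Finset K} (h : u ⊆ s) (hs : IndF s) : IndF u :=
  AlgebraicIndependent.mono (by exact_mod_cast Finset.coe_subset.2 h) hs

theorem le_ftrdeg {A s : Finset K} (hsA : s ⊆ A) (hs : IndF s) : s.card ≤ ftrdeg K A := by
  refine le_csSup ⟨A.card, ?_⟩ ⟨s, hsA, rfl, hs⟩
  rintro n ⟨u, huA, rfl, -⟩
  exact Finset.card_le_card huA

theorem ftrdeg_le {A : Finset K} {m : ℕ} (h : ∀ s ⊆ A, IndF s → s.card ≤ m) :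
    ftrdeg K A ≤ m := by
  refine csSup_le ⟨0, ∅, Finset.empty_subset A, Finset.card_empty, indF_empty⟩ ?_
  rintro n ⟨u, huA, rfl, hind⟩
  exact h u huA hind

/-- max-cardinality independent extension, and it spans. -/
theorem exists_max_ext (D S : Finset K) (hD : IndF D) (hDS : D ⊆ S) :
    ∃ E : Finset K, D ⊆ E ∧ E ⊆ S ∧ IndF E ∧
      (∀ z ∈ S, IsAlgebraic (IntermediateField.adjoin F₀ (↑E : Set K)) z) ∧
      (∀ u : Finset K, u ⊆ S → IndF u → D ⊆ u → u.card ≤ E.card) := by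
  classical
  set T := S.powerset.filter (fun u : Finset K => D ⊆ u ∧ IndF u) with hT
  have hDT : D ∈ T := Finset.mem_filter.2 ⟨Finset.mem_powerset.2 hDS, le_refl D, hD⟩
  obtain ⟨E, hET, hmax⟩ := Finset.exists_max_image T Finset.card ⟨D, hDT⟩
  obtain ⟨hES, hDE, hE⟩ := Finset.mem_filter.1 hET
  rw [Finset.mem_powerset] at hES
  refine ⟨E, hDE, hES, hE, ?_, fun u huS hu hDu =>
    hmax u (Finset.mem_filter.2 ⟨Finset.mem_powerset.2 huS, hDu, hu⟩)⟩
  intro z hzS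
  by_cases hzE : z ∈ E
  · have hz' : z ∈ IntermediateField.adjoin F₀ (↑E : Set K) :=
      IntermediateField.subset_adjoin _ _ hzE
    exact isAlgebraic_algebraMap (⟨z, hz'⟩ : ↥(IntermediateField.adjoin F₀ (↑E : Set K)))
  · have hnind : ¬ IndF (insert z E) := by
      intro hind
      have hmem : insert z E ∈ T := Finset.mem_filter.2
        ⟨Finset.mem_powerset.2 (Finset.insert_subset hzS hES),
          hDE.trans (Finset.subset_insert z E), hind⟩
      have := hmax _ hmem
      rw [Finset.card_insert_of_notMem hzE] at this
      omega
    have hzE' : z ∉ (↑E : Set K) := fun h => hzE (Finset.mem_coe.1 h)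
    have : ¬ AlgebraicIndependent F₀ ((↑) : ↥(insert z (↑E : Set K)) → K) := by
      intro h
      apply hnind
      unfold IndF
      rw [Finset.coe_insert]
      exact h
    have halg : IsAlgebraic (Algebra.adjoin F₀ (↑E : Set K)) z := by
      by_contra htr
      exact this ((ind_insert_iff' hE hzE').2 htr)
    exact IsAlgebraic.tower_top_of_subalgebra_le
      (IntermediateField.algebra_adjoin_le_adjoin _ _) halg

theorem ftrdeg_submodular' (K' : Type*) [Field K'] (A B : Finset K') :
    ftrdeg K' (A ∪ B) + ftrdeg K' (A ∩ B) ≤ ftrdeg K' A + ftrdeg K' B := by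
  classical
  obtain ⟨C, -, hCAB, hC, hCspan, -⟩ :=
    exists_max_ext (∅ : Finset K') (A ∩ B) indF_empty (Finset.empty_subset _)
  obtain ⟨D, hCD, hDA, hD, hDspan, -⟩ :=
    exists_max_ext C A hC (hCAB.trans (Finset.inter_subset_left))
  obtain ⟨E, hDE, hEDB, hE, hEspan, -⟩ :=
    exists_max_ext D (D ∪ B) hD (Finset.subset_union_left)
  -- E spans A ∪ B
  have hEspanAB : ∀ z ∈ A ∪ B,
      IsAlgebraic (IntermediateField.adjoin (⊥ : Subfield K') (↑E : Set K')) z := by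
    intro z hz
    rcases Finset.mem_union.1 hz with hz | hz
    · exact alg_mono' (IntermediateField.adjoin.mono _ _ _
        (by exact_mod_cast Finset.coe_subset.2 hDE)) (hDspan z hz)
    · exact hEspan z (Finset.mem_union_right D hz)
  -- upper bounds
  have hU : ftrdeg K' (A ∪ B) ≤ E.card := by
    refine ftrdeg_le fun s hsAB hs => ?_
    exact core' s hs E (fun z hz => hEspanAB z (hsAB hz))
  have hI : ftrdeg K' (A ∩ B) ≤ C.card := by
    refine ftrdeg_le fun s hsAB hs => ?_
    exact core' s hs C (fun z hz => hCspan z (hsAB hz))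
  -- lower bounds
  have hA : D.card ≤ ftrdeg K' A := le_ftrdeg hDA hD
  set G := C ∪ (E \ D) with hG
  have hGB : G ⊆ B := by
    intro z hz
    rcases Finset.mem_union.1 hz with hz | hz
    · exact (Finset.inter_subset_right) (hCAB hz)
    · obtain ⟨hzE, hzD⟩ := Finset.mem_sdiff.1 hz
      rcases Finset.mem_union.1 (hEDB hzE) with h | h
      · exact absurd h hzD
      · exact h
  have hGE : G ⊆ E := by
    intro z hz
    rcases Finset.mem_union.1 hz with hz | hz
    · exact hDE (hCD hz)
    · exact (Finset.mem_sdiff.1 hz).1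
  have hGind : IndF G := indF_mono hGE hE
  have hB : G.card ≤ ftrdeg K' B := le_ftrdeg hGB hGind
  have hGcard : G.card = C.card + (E.card - D.card) := by
    rw [hG, Finset.card_union_of_disjoint, Finset.card_sdiff_of_subset hDE]
    exact Finset.disjoint_left.2 fun z hzC hzED => (Finset.mem_sdiff.1 hzED).2 (hCD hzC)
  have hDEcard : D.card ≤ E.card := Finset.card_le_card hDE
  omega

end main

/-- transcendence degree is submodular on finite subsets of a field. -/
theorem ftrdeg_submodular (K : Type*) [Field K] (A B : Finset K) :
    ftrdeg K (A ∪ B) + ftrdeg K (A ∩ B) ≤ ftrdeg K A + ftrdeg K B :=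
  ftrdeg_submodular' K A B
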